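/- Let μ be a Lyndon word and let a', b' ∈ [1, |μ|] with a' < b'. Then the strings μ_{a'}·μ and μ_{b'}·μ (where μ_x denotes the suffix of μ starting at position x) have a mismatch within their common length, i.e., lcp(μ_{a'}·μ, μ_{b'}·μ) < min(|μ_{a'}·μ|, |μ_{b'}·μ|). -/

import Mathlib

variable {α : Type*} [LinearOrder α]

/-- A Lyndon word: nonempty and strictly smaller than all of its proper nonempty suffixes. -/
def IsLyndon (s : List α) : Prop :=
  s ≠ [] ∧ ∀ i, 0 < i → i < s.length → List.Lex (· < ·) s (s.drop i)

/-- The `i`-th suffix of `S` (1-indexed); `sfx S 0 = []` plays the role of the sentinel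
suffix `S₀ = $`, and `sfx S (n+1) = []` plays the role of `S_{n+1} = $`
(the empty list is lexicographically smaller than every nonempty list). -/
def sfx (S : List α) (i : ℕ) : List α := if i = 0 then [] else S.drop (i - 1)

open scoped Classical in
/-- `pss S j = max {k ∈ [0,j) : S_k ≺ S_j}`. -/
noncomputable def pss (S : List α) (j : ℕ) : ℕ :=
  Nat.findGreatest (fun k => List.Lex (· < ·) (sfx S k) (sfx S j)) (j - 1)

/-- `nss S i = min {j ∈ (i, n+1] : S_j ≺ S_i}`. -/
noncomputable def nss (S : List α) (i : ℕ) : ℕ :=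
  sInf {j | i < j ∧ j ≤ S.length + 1 ∧ List.Lex (· < ·) (sfx S j) (sfx S i)}

/-- Length of the longest common prefix of two lists. -/
def lcp : List α → List α → ℕ
  | a :: s, b :: t => if a = b then lcp s t + 1 else 0
  | _, _ => 0

/-- The PSS closure: all iterates of `pss` starting from `j`. -/
noncomputable def pssClosure (S : List α) (j : ℕ) : Set ℕ :=
  {k | ∃ m, (pss S)^[m] j = k}

open scoped Classical in
/-- Size of the subtree of node `i` in the PSS tree of `S`. -/
noncomputable def subtreeSize (S : List α) (i : ℕ) : ℕ :=
  ((Finset.range (S.length + 1)).filter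
    (fun j => j = i ∨ ∃ m, 0 < m ∧ (pss S)^[m] j = i)).card

open scoped Classical in
/-- `lam S i`: length of the longest Lyndon word starting at position `i` (1-indexed). -/
noncomputable def lam (S : List α) (i : ℕ) : ℕ :=
  Nat.findGreatest (fun ℓ => IsLyndon ((S.drop (i - 1)).take ℓ)) (S.length + 1 - i)


private theorem lcp_prefix_aux : ∀ (u v : List α), v.length ≤ lcp u v → v <+: u
  | _, [], _ => by simp
  | [], _ :: _, h => by simp [lcp] at h
  | a :: s, b :: t, h => by
    by_cases hab : a = b
    · subst hab
      have h' : t.length ≤ lcp s t := by simp [lcp] at h; omega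
      obtain ⟨r, hr⟩ := lcp_prefix_aux s t h'
      exact ⟨r, by rw [List.cons_append, hr]⟩
    · simp [lcp, hab] at h

private theorem lex_proper_prefix : ∀ (l : List α) (a : α) (w : List α),
    List.Lex (· < ·) l (l ++ a :: w)
  | [], _, _ => List.Lex.nil
  | b :: l, a, w => List.Lex.cons (lex_proper_prefix l a w)

/-- for a Lyndon word `μ` and `1 ≤ a' < b' ≤ |μ|`, the strings
`μ_{a'}·μ` and `μ_{b'}·μ` have a mismatch within their common length. -/
theorem stmt7 (μ : List α) (hμ : IsLyndon μ) (a' b' : ℕ)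
    (ha : 1 ≤ a') (hab : a' < b') (hb : b' ≤ μ.length) :
    lcp (μ.drop (a' - 1) ++ μ) (μ.drop (b' - 1) ++ μ) <
      min (μ.drop (a' - 1) ++ μ).length (μ.drop (b' - 1) ++ μ).length := by
  set a := a' - 1 with hadef
  set b := b' - 1 with hbdef
  have hab' : a < b := by omega
  have hbl : b < μ.length := by omega
  have hdl : b - a ≤ μ.length := by omega
  -- not a prefix
  have hnp : ¬ (μ.drop b ++ μ) <+: (μ.drop a ++ μ) := by
    rintro ⟨w, hw⟩
    -- drop (μ.length - a) from both sides of hw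
    have key : μ.drop (b - a) ++ w = μ := by
      have := congrArg (List.drop (μ.length - a)) hw
      rw [List.append_assoc] at this
      rw [List.drop_left' (l₁ := μ.drop a) (by simp)] at this
      rw [show μ.length - a = (μ.drop b).length + (b - a) by simp; omega, ← List.drop_drop,
        List.drop_left, List.drop_append_of_le_length (by omega)] at this
      exact this
    -- w is nonempty
    have hwlen : w.length = b - a := by
      have := congrArg List.length key
      simp [List.length_drop] at this
      omega
    obtain ⟨c, w', rfl⟩ : ∃ c w', w = c :: w' := by
      cases w with
      | nil => exfalso; simp at hwlen; omega
      | cons c w' => exact ⟨c, w', rfl⟩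
    have h1 : List.Lex (· < ·) μ (μ.drop (b - a)) :=
      hμ.2 (b - a) (by omega) (by omega)
    have h2 : List.Lex (· < ·) (μ.drop (b - a)) μ := by
      conv_rhs => rw [← key]
      exact lex_proper_prefix _ _ _
    exact asymm h1 h2
  have hlt : lcp (μ.drop a ++ μ) (μ.drop b ++ μ) < (μ.drop b ++ μ).length := by
    by_contra hc
    exact hnp (lcp_prefix_aux _ _ (le_of_not_gt hc))
  have hlen : (μ.drop b ++ μ).length ≤ (μ.drop a ++ μ).length := by
    simp [List.length_drop]; omega
  omega
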